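/- Let h and I be independent random variables on a probability space (Ω,𝓕,P), where h is exponentially distributed with rate 1 and the law of I has density f_λ(x) = (λ/4)·(π/x)^{3/2}·exp(−π⁴λ²/(16x)) on (0,∞) for some λ > 0. Then for every β > 0 and d > 0, P(h ≥ β·d⁴·I) = exp(−π·λ·d²·β^{1/2}·(π/2)) = exp(−(π²/2)·λ·d²·√β). (This realizes Proposition 3.1 for path-loss exponent α = 4, where ρ = π/2: the successful transmission probability of the reference scheme is 𝓟ʳ = exp(−π λ₀ d² β^{2/α} ρ).) -/

import Mathlib

open MeasureTheory ProbabilityTheory Real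

open Set

theorem vsurj (b t : ℝ) (hb : 0 < b) (ht : 0 < t) (y : ℝ) :
    ∃ u > 0, t * u - b / u = y := by
  set D := Real.sqrt (y^2 + 4*b*t) with hD
  have hD2 : D^2 = y^2 + 4*b*t := Real.sq_sqrt (by positivity)
  have hDy : |y| < D := by
    rw [← Real.sqrt_sq_eq_abs]
    exact Real.sqrt_lt_sqrt (sq_nonneg y) (by nlinarith)
  have h1 : -y < D := by rcases abs_lt.mp hDy with ⟨h,h'⟩; linarith
  have hyD : 0 < y + D := by linarith
  have hu : 0 < (y + D) / (2*t) := by positivity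
  refine ⟨(y + D)/(2*t), hu, ?_⟩
  rw [div_div_eq_mul_div, eq_comm]
  field_simp
  linear_combination (-1) * hD2

theorem key1 (b t : ℝ) (hb : 0 < b) (ht : 0 < t) :
    ∫ u in Ioi (0:ℝ), (t + b/u^2) * Real.exp (-(t*u - b/u)^2) = Real.sqrt π := by
  have hs : MeasurableSet (Ioi (0:ℝ)) := measurableSet_Ioi
  have hderiv : ∀ u ∈ Ioi (0:ℝ),
      HasDerivWithinAt (fun u => t*u - b/u) (t + b/u^2) (Ioi 0) u := by
    intro u hu
    have hu0 : (u:ℝ) ≠ 0 := ne_of_gt hu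
    have ha : HasDerivAt (fun u:ℝ => t*u) t u := by simpa using (hasDerivAt_id u).const_mul t
    have hbd : HasDerivAt (fun u:ℝ => b/u) (-(b/u^2)) u := by
      simpa [div_eq_mul_inv, mul_neg] using (hasDerivAt_inv hu0).const_mul b
    simpa [sub_neg_eq_add] using (ha.fun_sub hbd).hasDerivWithinAt
  have hinj : InjOn (fun u => t*u - b/u) (Ioi (0:ℝ)) := by
    apply StrictMonoOn.injOn
    intro x hx y hy hxy
    simp only [mem_Ioi] at hx hy
    have h1 : b/y < b/x := div_lt_div_of_pos_left hb hx hxy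
    have h2 : t*x < t*y := by nlinarith
    simp only
    linarith
  have himg : (fun u => t*u - b/u) '' Ioi (0:ℝ) = univ := by
    ext y
    simp only [mem_image, mem_univ, iff_true, mem_Ioi]
    obtain ⟨u, hu, hvu⟩ := vsurj b t hb ht y
    exact ⟨u, hu, hvu⟩
  have hcv := integral_image_eq_integral_abs_deriv_smul hs hderiv hinj
    (fun x => Real.exp (-x^2))
  rw [himg, Measure.restrict_univ] at hcv
  have hgauss : ∫ x : ℝ, Real.exp (-x^2) = Real.sqrt π := by
    simpa using integral_gaussian 1
  rw [hgauss] at hcv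
  rw [hcv]
  refine setIntegral_congr_fun hs fun u hu => ?_
  have hu0 : (0:ℝ) < u := hu
  have hpos : 0 < t + b/u^2 := by positivity
  simp [abs_of_pos hpos, smul_eq_mul]

theorem key2 (b t : ℝ) (hb : 0 < b) (ht : 0 < t) :
    ∫ u in Ioi (0:ℝ), Real.exp (-(t*u - b/u)^2)
      = (b/t) * ∫ u in Ioi (0:ℝ), (u^2)⁻¹ * Real.exp (-(t*u - b/u)^2) := by
  have hs : MeasurableSet (Ioi (0:ℝ)) := measurableSet_Ioi
  have ht0 : t ≠ 0 := ne_of_gt ht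
  have hb0 : b ≠ 0 := ne_of_gt hb
  have hfun : (fun u:ℝ => b/(t*u)) = fun u:ℝ => (b/t) * u⁻¹ := by
    funext x
    rw [div_mul_eq_div_div, div_eq_mul_inv]
  have hderiv : ∀ u ∈ Ioi (0:ℝ),
      HasDerivWithinAt (fun u => b/(t*u)) (-(b/(t*u^2))) (Ioi 0) u := by
    intro u hu
    have hu0 : (u:ℝ) ≠ 0 := ne_of_gt hu
    have h1 : HasDerivAt (fun u:ℝ => (b/t) * u⁻¹) ((b/t) * (-(u^2)⁻¹)) u :=
      (hasDerivAt_inv hu0).const_mul (b/t)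
    have h2 : (b/t) * (-(u^2)⁻¹) = -(b/(t*u^2)) := by field_simp
    rw [hfun]
    rw [h2] at h1
    exact h1.hasDerivWithinAt
  have hinj : InjOn (fun u => b/(t*u)) (Ioi (0:ℝ)) := by
    intro x hx y hy hxy
    simp only [mem_Ioi] at hx hy
    simp only at hxy
    field_simp at hxy
    linarith
  have himg : (fun u => b/(t*u)) '' Ioi (0:ℝ) = Ioi 0 := by
    ext y
    simp only [mem_image, mem_Ioi]
    constructor
    · rintro ⟨u, hu, rfl⟩; positivity
    · intro hy
      refine ⟨b/(t*y), by positivity, ?_⟩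
      field_simp
  have hcv := integral_image_eq_integral_abs_deriv_smul hs hderiv hinj
    (fun x => Real.exp (-(t*x - b/x)^2))
  rw [himg] at hcv
  rw [hcv, ← integral_const_mul]
  refine setIntegral_congr_fun hs fun u hu => ?_
  have hu0 : (0:ℝ) < u := hu
  have habs : |(-(b/(t*u^2)))| = b/(t*u^2) := by
    rw [abs_neg, abs_of_pos (by positivity)]
  rw [habs, smul_eq_mul]
  have harg : t*(b/(t*u)) - b/(b/(t*u)) = -(t*u - b/u) := by
    field_simp
    ring
  rw [harg, neg_sq]
  field_simp

theorem expand_sq (b t u : ℝ) (hu : u ≠ 0) :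
    (t*u - b/u)^2 = t^2*u^2 - 2*t*b + b^2/u^2 := by
  field_simp
  ring

theorem intE (b t : ℝ) (hb : 0 < b) (ht : 0 < t) :
    IntegrableOn (fun u => Real.exp (-(t*u - b/u)^2)) (Ioi (0:ℝ)) := by
  have hmeas : Measurable fun u : ℝ => Real.exp (-(t*u - b/u)^2) := by fun_prop
  refine Integrable.mono'
    (g := fun u => Real.exp (2*t*b) * Real.exp (-(t^2)*u^2))
    (((integrable_exp_neg_mul_sq (by positivity : (0:ℝ) < t^2)).const_mul _).integrableOn)
    hmeas.aestronglyMeasurable ?_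
  rw [ae_restrict_iff' measurableSet_Ioi]
  refine Filter.Eventually.of_forall fun u hu => ?_
  have hu0 : (0:ℝ) < u := hu
  rw [Real.norm_eq_abs, abs_of_pos (Real.exp_pos _)]
  show Real.exp (-(t*u - b/u)^2) ≤ Real.exp (2*t*b) * Real.exp (-(t^2)*u^2)
  rw [← Real.exp_add]
  apply Real.exp_le_exp.2
  rw [expand_sq b t u hu0.ne']
  have h1 : 0 ≤ b^2/u^2 := by positivity
  nlinarith

theorem intI (b t : ℝ) (hb : 0 < b) (ht : 0 < t) :
    IntegrableOn (fun u => (u^2)⁻¹ * Real.exp (-(t*u - b/u)^2)) (Ioi (0:ℝ)) := by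
  have hmeas : Measurable fun u : ℝ => (u^2)⁻¹ * Real.exp (-(t*u - b/u)^2) := by fun_prop
  have hsplit : Ioc (0:ℝ) 1 ∪ Ioi 1 = Ioi 0 := Ioc_union_Ioi_eq_Ioi zero_le_one
  rw [← hsplit]
  apply IntegrableOn.union
  · -- on Ioc 0 1 : bounded by constant
    refine Integrable.mono'
      (g := fun _ => Real.exp (2*t*b) / b^2)
      (integrableOn_const measure_Ioc_lt_top.ne)
      hmeas.aestronglyMeasurable ?_
    rw [ae_restrict_iff' measurableSet_Ioc]
    refine Filter.Eventually.of_forall fun u hu => ?_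
    obtain ⟨hu0, hu1⟩ := hu
    have hEle : Real.exp (-(t*u - b/u)^2) ≤ Real.exp (2*t*b) * Real.exp (-(b^2/u^2)) := by
      rw [← Real.exp_add]
      apply Real.exp_le_exp.2
      rw [expand_sq b t u hu0.ne']
      nlinarith [sq_nonneg (t*u)]
    have hinv : Real.exp (-(b^2/u^2)) ≤ u^2/b^2 := by
      have hx : (0:ℝ) < b^2/u^2 := by positivity
      rw [Real.exp_neg]
      calc (Real.exp (b^2/u^2))⁻¹ ≤ (b^2/u^2)⁻¹ := by
            apply inv_anti₀ hx
            linarith [Real.add_one_le_exp (b^2/u^2)]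
        _ = u^2/b^2 := by rw [inv_div]
    rw [Real.norm_eq_abs, abs_of_pos (by positivity)]
    calc (u^2)⁻¹ * Real.exp (-(t*u - b/u)^2)
        ≤ (u^2)⁻¹ * (Real.exp (2*t*b) * (u^2/b^2)) := by
          apply mul_le_mul_of_nonneg_left _ (by positivity)
          calc Real.exp (-(t*u - b/u)^2) ≤ Real.exp (2*t*b) * Real.exp (-(b^2/u^2)) := hEle
            _ ≤ Real.exp (2*t*b) * (u^2/b^2) :=
                mul_le_mul_of_nonneg_left hinv (Real.exp_pos _).le
      _ = Real.exp (2*t*b) / b^2 := by field_simp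
  · -- on Ioi 1 : bounded by gaussian
    refine Integrable.mono'
      (g := fun u => Real.exp (2*t*b) * Real.exp (-(t^2)*u^2))
      ((((integrable_exp_neg_mul_sq (by positivity : (0:ℝ) < t^2)).const_mul
        _).integrableOn).mono_set (fun x hx => trivial))
      hmeas.aestronglyMeasurable ?_
    rw [ae_restrict_iff' measurableSet_Ioi]
    refine Filter.Eventually.of_forall fun u hu => ?_
    have hu1 : (1:ℝ) < u := hu
    have hu0 : (0:ℝ) < u := by linarith
    rw [Real.norm_eq_abs, abs_of_pos (by positivity)]
    have h2 : (u^2)⁻¹ ≤ 1 := by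
      rw [inv_le_one_iff₀]
      right; nlinarith
    calc (u^2)⁻¹ * Real.exp (-(t*u - b/u)^2)
        ≤ 1 * Real.exp (-(t*u - b/u)^2) :=
          mul_le_mul_of_nonneg_right h2 (Real.exp_pos _).le
      _ = Real.exp (-(t*u - b/u)^2) := one_mul _
      _ ≤ Real.exp (2*t*b) * Real.exp (-(t^2)*u^2) := by
          rw [← Real.exp_add]
          apply Real.exp_le_exp.2
          rw [expand_sq b t u hu0.ne']
          have hq : 0 ≤ b^2/u^2 := by positivity
          nlinarith

theorem J1val (b t : ℝ) (hb : 0 < b) (ht : 0 < t) :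
    ∫ u in Ioi (0:ℝ), (u^2)⁻¹ * Real.exp (-(t*u - b/u)^2) = Real.sqrt π / (2*b) := by
  have hsplit : ∫ u in Ioi (0:ℝ), (t + b/u^2) * Real.exp (-(t*u - b/u)^2)
      = t * (∫ u in Ioi (0:ℝ), Real.exp (-(t*u - b/u)^2))
        + b * ∫ u in Ioi (0:ℝ), (u^2)⁻¹ * Real.exp (-(t*u - b/u)^2) := by
    rw [← integral_const_mul, ← integral_const_mul, ← integral_add
      ((intE b t hb ht).const_mul t) ((intI b t hb ht).const_mul b)]
    refine setIntegral_congr_fun measurableSet_Ioi fun u hu => ?_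
    have hu0 : (0:ℝ) < u := hu
    field_simp
  have h1 := key1 b t hb ht
  rw [hsplit, key2 b t hb ht] at h1
  have hb0 : b ≠ 0 := ne_of_gt hb
  have ht0 : t ≠ 0 := ne_of_gt ht
  field_simp at h1 ⊢
  linarith

theorem glasser (b t : ℝ) (hb : 0 < b) (ht : 0 < t) :
    ∫ x in Ioi (0:ℝ), x ^ (-(3:ℝ)/2) * Real.exp (-(b^2/x) - t^2*x)
      = Real.sqrt π / b * Real.exp (-(2*b*t)) := by
  have h := integral_comp_rpow_Ioi
    (fun x => x ^ (-(3:ℝ)/2) * Real.exp (-(b^2/x) - t^2*x)) (two_ne_zero (α := ℝ))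
  rw [← h]
  have heq : ∀ u ∈ Ioi (0:ℝ),
      (|2| * u ^ ((2:ℝ) - 1)) • ((u ^ (2:ℝ)) ^ (-(3:ℝ)/2)
          * Real.exp (-(b^2/u ^ (2:ℝ)) - t^2*u ^ (2:ℝ)))
        = (2 * Real.exp (-(2*b*t))) * ((u^2)⁻¹ * Real.exp (-(t*u - b/u)^2)) := by
    intro u hu
    have hu0 : (0:ℝ) < u := hu
    have h2 : u ^ (2:ℝ) = u^2 := by
      rw [← Real.rpow_natCast u 2]; norm_num
    have h3 : (u ^ (2:ℝ)) ^ (-(3:ℝ)/2) = (u^3)⁻¹ := by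
      rw [← Real.rpow_mul hu0.le]
      norm_num
    have h4 : u ^ ((2:ℝ) - 1) = u := by norm_num
    have hexp : -(b^2/u^2) - t^2*u^2 = -(t*u - b/u)^2 + -(2*b*t) := by
      rw [expand_sq b t u hu0.ne']
      ring
    rw [h4, h3, h2, hexp, Real.exp_add, smul_eq_mul]
    have hu3 : (u:ℝ)^3 ≠ 0 := by positivity
    field_simp
    ring
  rw [setIntegral_congr_fun measurableSet_Ioi heq, integral_const_mul, J1val b t hb ht]
  have hb0 : b ≠ 0 := ne_of_gt hb
  field_simp

theorem density_int (l : ℝ) (hl : 0 < l) (c : ℝ) (hc : 0 < c) :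
    ∫ x in Ioi (0:ℝ),
        (l/4 * (π/x) ^ ((3:ℝ)/2) * Real.exp (-(π^4*l^2/(16*x)))) * Real.exp (-(c*x))
      = Real.exp (-(π^2*l/2 * Real.sqrt c)) := by
  set b := π^2*l/4 with hbdef
  set t := Real.sqrt c with htdef
  have hb : 0 < b := by have := pi_pos; positivity
  have ht : 0 < t := Real.sqrt_pos.2 hc
  have ht2 : t^2 = c := Real.sq_sqrt hc.le
  have heq : ∀ x ∈ Ioi (0:ℝ),
      (l/4 * (π/x) ^ ((3:ℝ)/2) * Real.exp (-(π^4*l^2/(16*x)))) * Real.exp (-(c*x))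
        = (l/4 * π ^ ((3:ℝ)/2)) * (x ^ (-(3:ℝ)/2) * Real.exp (-(b^2/x) - t^2*x)) := by
    intro x hx
    have hx0 : (0:ℝ) < x := hx
    have h1 : (π/x) ^ ((3:ℝ)/2) = π ^ ((3:ℝ)/2) * x ^ (-(3:ℝ)/2) := by
      rw [div_eq_mul_inv, Real.mul_rpow pi_pos.le (by positivity),
        ← Real.rpow_neg_one x, ← Real.rpow_mul hx0.le]
      norm_num
    have h2 : b^2/x = π^4*l^2/(16*x) := by
      rw [hbdef]; field_simp; ring
    rw [h1, h2, ht2,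
      show -(π^4*l^2/(16*x)) - c*x = -(π^4*l^2/(16*x)) + -(c*x) from by ring,
      Real.exp_add]
    ring
  rw [setIntegral_congr_fun measurableSet_Ioi heq, integral_const_mul,
    glasser b t hb ht]
  have hsq : Real.sqrt π = π ^ ((1:ℝ)/2) := Real.sqrt_eq_rpow π
  have hpow : π ^ ((3:ℝ)/2) * π ^ ((1:ℝ)/2) = π^2 := by
    rw [← Real.rpow_add pi_pos]
    norm_num
  have hcoef : l/4 * π ^ ((3:ℝ)/2) * (Real.sqrt π / b) = 1 := by
    rw [hsq, hbdef]
    field_simp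
    nlinarith [hpow, pi_pos]
  have hstep : l/4 * π ^ ((3:ℝ)/2) * (Real.sqrt π / b * Real.exp (-(2*b*t)))
      = (l/4 * π ^ ((3:ℝ)/2) * (Real.sqrt π / b)) * Real.exp (-(2*b*t)) := by ring
  rw [hstep, hcoef, one_mul]
  congr 1
  rw [hbdef]
  ring

set_option maxHeartbeats 1000000 in
theorem intG (b t : ℝ) (hb : 0 < b) (ht : 0 < t) :
    IntegrableOn (fun x => x ^ (-(3:ℝ)/2) * Real.exp (-(b^2/x) - t^2*x)) (Ioi (0:ℝ)) := by
  have hs : MeasurableSet (Ioi (0:ℝ)) := measurableSet_Ioi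
  have hderiv : ∀ u ∈ Ioi (0:ℝ),
      HasDerivWithinAt (fun u : ℝ => u^2) (2*u) (Ioi 0) u := by
    intro u hu
    simpa using (hasDerivAt_pow 2 u).hasDerivWithinAt
  have hinj : InjOn (fun u : ℝ => u^2) (Ioi (0:ℝ)) := by
    intro x hx y hy hxy
    have hx0 : (0:ℝ) < x := hx
    have hy0 : (0:ℝ) < y := hy
    have hxy' : x^2 = y^2 := hxy
    nlinarith [hxy']
  have himg : (fun u : ℝ => u^2) '' Ioi (0:ℝ) = Ioi 0 := by
    ext y
    simp only [mem_image, mem_Ioi]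
    constructor
    · rintro ⟨u, hu, rfl⟩; positivity
    · intro hy
      exact ⟨Real.sqrt y, Real.sqrt_pos.2 hy, Real.sq_sqrt hy.le⟩
  rw [← himg, integrableOn_image_iff_integrableOn_abs_deriv_smul hs hderiv hinj]
  have hint : IntegrableOn
      (fun u => 2 * Real.exp (-(2*b*t)) * ((u^2)⁻¹ * Real.exp (-(t*u - b/u)^2)))
      (Ioi (0:ℝ)) := (intI b t hb ht).const_mul _
  refine hint.congr_fun (fun u hu => ?_) hs
  have hu0 : (0:ℝ) < u := hu
  have h2 : ((u^2 : ℝ)) ^ (-(3:ℝ)/2) = (u^3)⁻¹ := by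
    rw [← Real.rpow_natCast u 2, ← Real.rpow_mul hu0.le]
    norm_num
  have hexp : -(b^2/u^2) - t^2*u^2 = -(t*u - b/u)^2 + -(2*b*t) := by
    rw [expand_sq b t u hu0.ne']
    ring
  rw [smul_eq_mul, h2, hexp, Real.exp_add, abs_of_pos (by positivity : (0:ℝ) < 2*u)]
  have hu3 : (u:ℝ)^3 ≠ 0 := by positivity
  field_simp

open ProbabilityTheory in
theorem expIci (s : ℝ) (hs : 0 ≤ s) :
    expMeasure 1 (Ici s) = ENNReal.ofReal (Real.exp (-s)) := by
  have hwd : expMeasure 1 = volume.withDensity (exponentialPDF 1) := rfl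
  have hIic : expMeasure 1 (Iic s) = ENNReal.ofReal (1 - Real.exp (-s)) := by
    rw [hwd, withDensity_apply _ measurableSet_Iic,
      lintegral_exponentialPDF_eq_antiDeriv one_pos s, if_pos hs]
    norm_num
  have hsing : expMeasure 1 {s} = 0 := by
    rw [hwd]
    exact (withDensity_absolutelyContinuous volume _) volume_singleton
  have hIio : expMeasure 1 (Iio s) = ENNReal.ofReal (1 - Real.exp (-s)) := by
    rw [← Iio_union_right, measure_union (by simp) (measurableSet_singleton s), hsing,
      add_zero] at hIic
    exact hIic
  haveI : IsProbabilityMeasure (expMeasure 1) := isProbabilityMeasure_expMeasure one_pos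
  rw [← compl_Iio, measure_compl measurableSet_Iio (measure_ne_top _ _), measure_univ, hIio,
    ← ENNReal.ofReal_one, ← ENNReal.ofReal_sub]
  · norm_num
  · have : Real.exp (-s) ≤ 1 := Real.exp_le_one_iff.2 (by linarith)
    linarith

theorem intF (l : ℝ) (hl : 0 < l) (c : ℝ) (hc : 0 < c) :
    IntegrableOn (fun x =>
      (l/4 * (π/x) ^ ((3:ℝ)/2) * Real.exp (-(π^4*l^2/(16*x)))) * Real.exp (-(c*x)))
      (Ioi (0:ℝ)) := by
  set b := π^2*l/4 with hbdef
  set t := Real.sqrt c with htdef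
  have hb : 0 < b := by have := pi_pos; positivity
  have ht : 0 < t := Real.sqrt_pos.2 hc
  have ht2 : t^2 = c := Real.sq_sqrt hc.le
  have hint : IntegrableOn
      (fun x => (l/4 * π ^ ((3:ℝ)/2)) * (x ^ (-(3:ℝ)/2) * Real.exp (-(b^2/x) - t^2*x)))
      (Ioi (0:ℝ)) := (intG b t hb ht).const_mul _
  refine hint.congr_fun (fun x hx => ?_) measurableSet_Ioi
  have hx0 : (0:ℝ) < x := hx
  have h1 : (π/x) ^ ((3:ℝ)/2) = π ^ ((3:ℝ)/2) * x ^ (-(3:ℝ)/2) := by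
    rw [div_eq_mul_inv, Real.mul_rpow pi_pos.le (by positivity),
      ← Real.rpow_neg_one x, ← Real.rpow_mul hx0.le]
    norm_num
  have h2 : b^2/x = π^4*l^2/(16*x) := by
    rw [hbdef]; field_simp; ring
  rw [h1, ← h2, ht2]
  beta_reduce
  rw [show -(b^2/x) - c*x = -(b^2/x) + -(c*x) from by ring,
    Real.exp_add]
  ring


/-- Proposition 3.1 for `α = 4` (where `ρ = π/2`): if `h` is unit-rate
exponential, independent of the interference `I` whose law has the Lévy
density `f_λ` of Lemma 3.1 on `(0,∞)`, then the success probability of the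
reference scheme is `P(h ≥ β d⁴ I) = exp(−π λ d² √β · (π/2)) = exp(−(π²/2) λ d² √β)`. -/
theorem stmt_12 {Ω : Type*} [MeasurableSpace Ω] (P : Measure Ω) [IsProbabilityMeasure P]
    (h I : Ω → ℝ) (hmh : Measurable h) (hmI : Measurable I)
    (l : ℝ) (hl : 0 < l)
    (hexp : Measure.map h P = expMeasure 1)
    (hindep : IndepFun h I P)
    (hlaw : Measure.map I P = volume.withDensity fun x =>
      ENNReal.ofReal (Set.indicator (Set.Ioi (0 : ℝ))
        (fun x => l / 4 * (π / x) ^ ((3 : ℝ) / 2) * Real.exp (-(π ^ 4 * l ^ 2 / (16 * x)))) x))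
    (β d : ℝ) (hβ : 0 < β) (hd : 0 < d) :
    (P {ω | β * d ^ 4 * I ω ≤ h ω}).toReal
        = Real.exp (-(π * l * d ^ 2 * Real.sqrt β * (π / 2))) ∧
      Real.exp (-(π * l * d ^ 2 * Real.sqrt β * (π / 2)))
        = Real.exp (-(π ^ 2 / 2 * l * d ^ 2 * Real.sqrt β)) := by
  constructor
  · set c := β * d^4 with hcdef
    have hc : 0 < c := by positivity
    set F : ℝ → ℝ := fun x => l/4 * (π/x) ^ ((3:ℝ)/2) * Real.exp (-(π^4*l^2/(16*x))) with hFdef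
    have hS : MeasurableSet {p : ℝ × ℝ | c * p.2 ≤ p.1} :=
      measurableSet_le (measurable_snd.const_mul c) measurable_fst
    haveI : IsProbabilityMeasure (expMeasure 1) := isProbabilityMeasure_expMeasure one_pos
    haveI : IsProbabilityMeasure (Measure.map I P) :=
      Measure.isProbabilityMeasure_map hmI.aemeasurable
    have hmap : Measure.map (fun ω => (h ω, I ω)) P
        = (expMeasure 1).prod (Measure.map I P) := by
      rw [← hexp]
      exact (indepFun_iff_map_prod_eq_prod_map_map hmh.aemeasurable hmI.aemeasurable).mp hindep
    have hPeq : P {ω | c * I ω ≤ h ω}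
        = ((expMeasure 1).prod (Measure.map I P)) {p : ℝ × ℝ | c * p.2 ≤ p.1} := by
      rw [← hmap, Measure.map_apply (hmh.prodMk hmI) hS]
      rfl
    have hmrp : Measurable fun x : ℝ => (π/x) ^ ((3:ℝ)/2) :=
      (Real.continuous_rpow_const (by norm_num)).measurable.comp
        (measurable_const.div measurable_id)
    have hmeasF : Measurable F :=
      (measurable_const.mul hmrp).mul (by fun_prop)
    have hmeasDens : Measurable fun x => ENNReal.ofReal (Set.indicator (Ioi (0:ℝ)) F x) :=
      ENNReal.measurable_ofReal.comp (hmeasF.indicator measurableSet_Ioi)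
    have key : P {ω | c * I ω ≤ h ω}
        = ∫⁻ x in Ioi (0:ℝ), ENNReal.ofReal (F x * Real.exp (-(c*x))) ∂volume := by
      rw [hPeq, Measure.prod_apply_symm hS, hlaw,
        lintegral_withDensity_eq_lintegral_mul_non_measurable _ hmeasDens
          (Filter.Eventually.of_forall fun x => ENNReal.ofReal_lt_top)]
      rw [← lintegral_indicator measurableSet_Ioi]
      refine lintegral_congr fun x => ?_
      by_cases hx : x ∈ Ioi (0:ℝ)
      · have hx0 : (0:ℝ) < x := hx
        have hslice : ((fun y : ℝ => (y, x)) ⁻¹' {p : ℝ × ℝ | c * p.2 ≤ p.1}) = Ici (c*x) := by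
          ext y; simp [mem_Ici]
        have hFnn : 0 ≤ F x := by
          rw [hFdef]
          have : (0:ℝ) ≤ (π/x) ^ ((3:ℝ)/2) := Real.rpow_nonneg (by positivity) _
          positivity
        simp only [Pi.mul_apply, Set.indicator_of_mem hx]
        rw [hslice, expIci (c*x) (by positivity), ← ENNReal.ofReal_mul hFnn]
      · simp [Set.indicator_of_notMem hx]
    have hnn : ∀ᵐ x ∂(volume.restrict (Ioi (0:ℝ))), 0 ≤ F x * Real.exp (-(c*x)) := by
      rw [ae_restrict_iff' measurableSet_Ioi]
      refine Filter.Eventually.of_forall fun x hx => ?_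
      have hx0 : (0:ℝ) < x := hx
      have : (0:ℝ) ≤ (π/x) ^ ((3:ℝ)/2) := Real.rpow_nonneg (by positivity) _
      rw [hFdef]
      positivity
    rw [key, ← ofReal_integral_eq_lintegral_ofReal (intF l hl c hc) hnn]
    rw [density_int l hl c hc, ENNReal.toReal_ofReal (Real.exp_pos _).le]
    congr 1
    rw [hcdef, Real.sqrt_mul hβ.le, show (d:ℝ)^4 = (d^2)^2 from by ring,
      Real.sqrt_sq (by positivity)]
    ring
  · congr 1
    ring
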